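/- With $\check P = F Q F^T$ where $F$ is the block lower-triangular lifted transition matrix (blocks $\Phi(t_i,t_j)$, identity on the diagonal) and $Q = \mathrm{diag}(Q_0,\ldots,Q_N)$ with each $Q_n$ invertible, the inverse kernel matrix $\check P^{-1} = F^{-T} Q^{-1} F^{-1}$ is block-tridiagonal: the $(i,j)$ block of $\check P^{-1}$ is zero whenever $|i-j| > 1$. -/
import Mathlib


open Matrix

/-- Blockwise transpose of a block matrix. -/
def blockT {N d : ℕ}
    (A : Matrix (Fin N) (Fin N) (Matrix (Fin d) (Fin d) ℝ)) :
    Matrix (Fin N) (Fin N) (Matrix (Fin d) (Fin d) ℝ) :=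
  Matrix.of fun i j => (A j i)ᵀ

lemma blockT_one {N d : ℕ} : blockT (N := N) (d := d) 1 = 1 := by
  ext i j
  by_cases h : i = j <;>
    simp [blockT, Matrix.one_apply, h, eq_comm]

lemma blockT_mul {N d : ℕ}
    (X Y : Matrix (Fin N) (Fin N) (Matrix (Fin d) (Fin d) ℝ)) :
    blockT (X * Y) = blockT Y * blockT X := by
  ext i j
  simp [blockT, Matrix.mul_apply, Matrix.transpose_sum, Matrix.transpose_mul]

/-- Theorem 1: the inverse kernel matrix
`P̌⁻¹ = F⁻ᵀ Q⁻¹ F⁻¹` is exactly sparse (block-tridiagonal). -/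
theorem inverse_kernel_block_tridiagonal
    {d N : ℕ} (t : Fin (N + 1) → ℝ) (ht : StrictMono t)
    (Φ : ℝ → ℝ → Matrix (Fin d) (Fin d) ℝ)
    (hΦ_id : ∀ s : ℝ, Φ s s = 1)
    (hΦ_comp : ∀ a b c : ℝ, Φ a b * Φ b c = Φ a c)
    (Q Qinv : Fin (N + 1) → Matrix (Fin d) (Fin d) ℝ)
    (hQ : ∀ n, Q n * Qinv n = 1 ∧ Qinv n * Q n = 1)
    (F Finv : Matrix (Fin (N + 1)) (Fin (N + 1)) (Matrix (Fin d) (Fin d) ℝ))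
    (hF : ∀ i j : Fin (N + 1),
      F i j = if (j : ℕ) ≤ (i : ℕ) then Φ (t i) (t j) else 0)
    (hFinv : ∀ i j : Fin (N + 1),
      Finv i j = if (i : ℕ) = (j : ℕ) + 1 then -Φ (t i) (t j)
                 else if j = i then 1 else 0)
    (P A : Matrix (Fin (N + 1)) (Fin (N + 1)) (Matrix (Fin d) (Fin d) ℝ))
    (hP : P = F * Matrix.diagonal Q * blockT F)
    (hA : A = blockT Finv * Matrix.diagonal Qinv * Finv) :
    (P * A = 1 ∧ A * P = 1) ∧
      ∀ i j : Fin (N + 1), ((i : ℕ) + 1 < (j : ℕ) ∨ (j : ℕ) + 1 < (i : ℕ)) →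
        A i j = 0 := by
  -- Finv * F = 1
  have hFinvF : Finv * F = 1 := by
    ext i j
    rw [Matrix.mul_apply]
    have hterm : ∀ k : Fin (N + 1), Finv i k * F k j =
        (if k = i then F i j else 0) +
        (if (i : ℕ) = (k : ℕ) + 1 then -(Φ (t i) (t k) * F k j) else 0) := by
      intro k
      rw [hFinv]
      by_cases h1 : (i : ℕ) = (k : ℕ) + 1
      · have hk : k ≠ i := by
          intro h; rw [h] at h1; omega
        simp [h1, hk, neg_mul]
      · by_cases h2 : k = i
        · subst h2; simp [h1]
        · simp [h1, h2]
    rw [Finset.sum_congr rfl (fun k _ => hterm k), Finset.sum_add_distrib,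
      Finset.sum_ite_eq' Finset.univ i (fun _ => F i j)]
    simp only [Finset.mem_univ, if_true]
    rcases Nat.eq_zero_or_pos (i : ℕ) with h0 | hpos
    · have hz : ∀ k : Fin (N + 1),
          (if (i : ℕ) = (k : ℕ) + 1 then -(Φ (t i) (t k) * F k j) else 0) = 0 := by
        intro k; rw [if_neg]; omega
      rw [Finset.sum_congr rfl (fun k _ => hz k), Finset.sum_const_zero, add_zero,
        hF, Matrix.one_apply]
      by_cases hij : i = j
      · subst hij; simp [h0, hΦ_id]
      · have : ¬ (j : ℕ) ≤ (i : ℕ) := by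
          have := (Fin.val_ne_iff (a := i) (b := j)).mpr hij
          omega
        simp [this, hij]
    · set k0 : Fin (N + 1) := ⟨(i : ℕ) - 1, by omega⟩ with hk0
      have hcond : ∀ k : Fin (N + 1), ((i : ℕ) = (k : ℕ) + 1) ↔ k = k0 := by
        intro k
        constructor
        · intro h; apply Fin.ext; simp [hk0]; omega
        · intro h; subst h; simp [hk0]; omega
      have : (∑ k : Fin (N + 1),
          if (i : ℕ) = (k : ℕ) + 1 then -(Φ (t i) (t k) * F k j) else 0) =
          -(Φ (t i) (t k0) * F k0 j) := by
        rw [Finset.sum_congr rfl (fun k _ => by rw [if_congr (hcond k) rfl rfl]),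
          Finset.sum_ite_eq' Finset.univ k0 (fun k => -(Φ (t i) (t k) * F k j))]
        simp
      rw [this, hF, hF, Matrix.one_apply]
      have hk0v : (k0 : ℕ) + 1 = (i : ℕ) := by simp [hk0]; omega
      by_cases hij : i = j
      · subst hij
        have : ¬ (i : ℕ) ≤ (k0 : ℕ) := by omega
        simp [this, hΦ_id]
      · have hvne : (i : ℕ) ≠ (j : ℕ) := (Fin.val_ne_iff (a := i) (b := j)).mpr hij
        by_cases hle : (j : ℕ) ≤ (k0 : ℕ)
        · have hle' : (j : ℕ) ≤ (i : ℕ) := by omega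
          simp [hle, hle', hij, hΦ_comp]
        · have hle' : ¬ (j : ℕ) ≤ (i : ℕ) := by omega
          simp [hle, hle', hij]
  -- F * Finv = 1, via the ring equivalence with flat matrices
  have hFFinv : F * Finv = 1 := by
    have e := Matrix.compRingEquiv (Fin (N + 1)) (Fin d) ℝ
    have h1 : e Finv * e F = 1 := by rw [← _root_.map_mul, hFinvF, _root_.map_one]
    have h2 : e F * e Finv = 1 := mul_eq_one_comm.mpr h1
    have h3 : e (F * Finv) = e 1 := by rw [_root_.map_mul, h2, _root_.map_one]
    exact e.injective h3
  have hD : Matrix.diagonal Q * Matrix.diagonal Qinv = 1 := by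
    rw [Matrix.diagonal_mul_diagonal]
    have : (fun n => Q n * Qinv n) = fun _ => (1 : Matrix (Fin d) (Fin d) ℝ) :=
      funext fun n => (hQ n).1
    rw [this, Matrix.diagonal_one]
  have hD' : Matrix.diagonal Qinv * Matrix.diagonal Q = 1 := by
    rw [Matrix.diagonal_mul_diagonal]
    have : (fun n => Qinv n * Q n) = fun _ => (1 : Matrix (Fin d) (Fin d) ℝ) :=
      funext fun n => (hQ n).2
    rw [this, Matrix.diagonal_one]
  have hbt1 : blockT F * blockT Finv = 1 := by
    rw [← blockT_mul, hFinvF, blockT_one]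
  have hbt2 : blockT Finv * blockT F = 1 := by
    rw [← blockT_mul, hFFinv, blockT_one]
  refine ⟨⟨?_, ?_⟩, ?_⟩
  · rw [hP, hA]
    simp only [mul_assoc]
    rw [← mul_assoc (blockT F), hbt1, one_mul, ← mul_assoc (Matrix.diagonal Q), hD,
      one_mul, hFFinv]
  · rw [hP, hA]
    simp only [mul_assoc]
    rw [← mul_assoc Finv, hFinvF, one_mul, ← mul_assoc (Matrix.diagonal Qinv), hD',
      one_mul, hbt2]
  · intro i j hij
    rw [hA, Matrix.mul_apply]
    apply Finset.sum_eq_zero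
    intro k _
    rw [Matrix.mul_diagonal]
    rcases (by omega : ¬ ((k : ℕ) = (i : ℕ) ∨ (k : ℕ) = (i : ℕ) + 1) ∨
        ¬ ((k : ℕ) = (j : ℕ) ∨ (k : ℕ) = (j : ℕ) + 1)) with h | h
    · have hki : Finv k i = 0 := by
        rw [hFinv, if_neg (by omega), if_neg (by
          intro hh; subst hh; omega)]
      have : blockT Finv i k = 0 := by simp [blockT, hki]
      rw [this, zero_mul, zero_mul]
    · have hkj : Finv k j = 0 := by
        rw [hFinv, if_neg (by omega), if_neg (by
          intro hh; subst hh; omega)]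
      rw [hkj, mul_zero]
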